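/- For all r₁, r₂ ≥ 0 and all θ₁, θ₂ ∈ ℝ with |θ₂ − θ₁| ≤ π, one has |r₂·e^{iθ₂} − r₁·e^{iθ₁}| ≤ |r₂ − r₁| + r₁·|θ₂ − θ₁| and |r₂ − r₁| + r₁·|θ₂ − θ₁| ≤ (1 + π)·|r₂·e^{iθ₂} − r₁·e^{iθ₁}|. In other words, for angle differences of at most π the Euclidean distance between the points with polar coordinates (r₁,θ₁) and (r₂,θ₂) is comparable, with universal constants, to |r₂ − r₁| + r₁·|θ₂ − θ₁|. -/

import Mathlib

lemma sq_abs_polar (r₁ r₂ θ₁ θ₂ : ℝ) :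
    (‖(r₂ : ℂ) * Complex.exp ((θ₂ : ℂ) * Complex.I) -
        (r₁ : ℂ) * Complex.exp ((θ₁ : ℂ) * Complex.I)‖) ^ 2
      = (r₂ - r₁) ^ 2 + 2 * r₁ * r₂ * (1 - Real.cos (θ₂ - θ₁)) := by
  rw [Complex.sq_norm, Complex.normSq_apply]
  simp [Complex.exp_mul_I, Complex.add_re, Complex.add_im, Complex.mul_re, Complex.mul_im,
    Complex.cos_ofReal_re, Complex.sin_ofReal_re, Real.cos_sub]
  linear_combination r₂ ^ 2 * Real.sin_sq_add_cos_sq θ₂ + r₁ ^ 2 * Real.sin_sq_add_cos_sq θ₁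

lemma abs_exp_mul_I_sub_one_le (φ : ℝ) :
    ‖Complex.exp ((φ : ℂ) * Complex.I) - 1‖ ≤ |φ| := by
  have h : (‖Complex.exp ((φ : ℂ) * Complex.I) - 1‖) ^ 2
      = 2 * (1 - Real.cos φ) := by
    rw [Complex.sq_norm, Complex.normSq_apply]
    simp [Complex.exp_mul_I, Complex.add_re, Complex.add_im, Complex.mul_re, Complex.mul_im,
      Complex.cos_ofReal_re, Complex.sin_ofReal_re]
    linear_combination Real.sin_sq_add_cos_sq φ
  have hcos : 1 - φ ^ 2 / 2 ≤ Real.cos φ := Real.one_sub_sq_div_two_le_cos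
  have h2 : (‖Complex.exp ((φ : ℂ) * Complex.I) - 1‖) ^ 2 ≤ |φ| ^ 2 := by
    rw [h, sq_abs]; nlinarith
  have := norm_nonneg (Complex.exp ((φ : ℂ) * Complex.I) - 1)
  nlinarith [abs_nonneg φ]

/-- For points given in polar coordinates with angle difference at most `π`, the
Euclidean distance is comparable to `|r₂ − r₁| + r₁·|θ₂ − θ₁|`:
`|r₂e^{iθ₂} − r₁e^{iθ₁}| ≤ |r₂ − r₁| + r₁|θ₂ − θ₁| ≤ (1+π)|r₂e^{iθ₂} − r₁e^{iθ₁}|`. -/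
theorem polar_dist_comparable (r₁ r₂ θ₁ θ₂ : ℝ) (hr₁ : 0 ≤ r₁) (hr₂ : 0 ≤ r₂)
    (hθ : |θ₂ - θ₁| ≤ Real.pi) :
    ‖(r₂ : ℂ) * Complex.exp ((θ₂ : ℂ) * Complex.I) -
        (r₁ : ℂ) * Complex.exp ((θ₁ : ℂ) * Complex.I)‖ ≤
      |r₂ - r₁| + r₁ * |θ₂ - θ₁| ∧
    |r₂ - r₁| + r₁ * |θ₂ - θ₁| ≤
      (1 + Real.pi) * ‖(r₂ : ℂ) * Complex.exp ((θ₂ : ℂ) * Complex.I) -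
        (r₁ : ℂ) * Complex.exp ((θ₁ : ℂ) * Complex.I)‖ := by
  set z : ℂ := (r₂ : ℂ) * Complex.exp ((θ₂ : ℂ) * Complex.I) -
      (r₁ : ℂ) * Complex.exp ((θ₁ : ℂ) * Complex.I) with hz
  set φ : ℝ := θ₂ - θ₁ with hφ
  have hD : (‖z‖) ^ 2 = (r₂ - r₁) ^ 2 + 2 * r₁ * r₂ * (1 - Real.cos φ) :=
    sq_abs_polar r₁ r₂ θ₁ θ₂
  have hDnn : 0 ≤ ‖z‖ := norm_nonneg z
  constructor
  · -- upper bound via triangle inequality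
    have hsplit : z = ((r₂ : ℂ) - r₁) * Complex.exp ((θ₂ : ℂ) * Complex.I) +
        (r₁ : ℂ) * (Complex.exp ((θ₁ : ℂ) * Complex.I) *
          (Complex.exp ((φ : ℂ) * Complex.I) - 1)) := by
      have he : Complex.exp ((θ₁ : ℂ) * Complex.I) * Complex.exp ((φ : ℂ) * Complex.I)
          = Complex.exp ((θ₂ : ℂ) * Complex.I) := by
        rw [← Complex.exp_add, hφ]
        push_cast
        ring_nf
      rw [hz]
      linear_combination -(r₁ : ℂ) * he
    calc ‖z‖ ≤ ‖((r₂ : ℂ) - r₁) * Complex.exp ((θ₂ : ℂ) * Complex.I)‖ +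
        ‖(r₁ : ℂ) * (Complex.exp ((θ₁ : ℂ) * Complex.I) *
          (Complex.exp ((φ : ℂ) * Complex.I) - 1))‖ := by
          rw [hsplit]; exact norm_add_le _ _
      _ ≤ |r₂ - r₁| + r₁ * |φ| := by
          rw [norm_mul, norm_mul, norm_mul, Complex.norm_exp_ofReal_mul_I,
            Complex.norm_exp_ofReal_mul_I]
          have h1 : ‖(r₂ : ℂ) - r₁‖ = |r₂ - r₁| := by
            rw [← Complex.ofReal_sub, Complex.norm_real, Real.norm_eq_abs]
          have h2 : ‖(r₁ : ℂ)‖ = r₁ := by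
            rw [Complex.norm_real, Real.norm_eq_abs, abs_of_nonneg hr₁]
          rw [h1, h2, mul_one, one_mul]
          gcongr
          exact abs_exp_mul_I_sub_one_le φ
  · -- lower bound
    have h1 : |r₂ - r₁| ≤ ‖z‖ := by
      have := abs_norm_sub_norm_le ((r₂ : ℂ) * Complex.exp ((θ₂ : ℂ) * Complex.I))
        ((r₁ : ℂ) * Complex.exp ((θ₁ : ℂ) * Complex.I))
      simpa [Complex.norm_exp_ofReal_mul_I, Complex.norm_real,
        abs_of_nonneg hr₁, abs_of_nonneg hr₂] using this
    have hcos : Real.cos φ ≤ 1 - 2 / Real.pi ^ 2 * φ ^ 2 :=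
      Real.cos_le_one_sub_mul_cos_sq hθ
    have hπ : 0 < Real.pi := Real.pi_pos
    have hφπ : φ ^ 2 ≤ Real.pi ^ 2 := by
      have := abs_le.mp hθ
      nlinarith
    have h2sq : (r₁ * |φ|) ^ 2 ≤ (Real.pi * ‖z‖) ^ 2 := by
      rw [mul_pow, mul_pow, sq_abs, hD]
      have hπ2 : (0:ℝ) < Real.pi ^ 2 := by positivity
      have hkey : 2 * φ ^ 2 ≤ Real.pi ^ 2 * (1 - Real.cos φ) := by
        have h' : 2 / Real.pi ^ 2 * φ ^ 2 ≤ 1 - Real.cos φ := by linarith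
        calc 2 * φ ^ 2 = Real.pi ^ 2 * (2 / Real.pi ^ 2 * φ ^ 2) := by
              field_simp
          _ ≤ Real.pi ^ 2 * (1 - Real.cos φ) := by
              exact mul_le_mul_of_nonneg_left h' hπ2.le
      have hA : 0 ≤ (Real.pi ^ 2 - φ ^ 2) * (r₂ - r₁) ^ 2 :=
        mul_nonneg (by linarith) (sq_nonneg _)
      have hB : 0 ≤ φ ^ 2 * (r₂ ^ 2 + 2 * r₁ * r₂) :=
        mul_nonneg (sq_nonneg _) (by nlinarith)
      have hC : 2 * r₁ * r₂ * (2 * φ ^ 2) ≤ 2 * r₁ * r₂ * (Real.pi ^ 2 * (1 - Real.cos φ)) :=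
        mul_le_mul_of_nonneg_left hkey (by positivity)
      nlinarith [hA, hB, hC]
    have h2 : r₁ * |φ| ≤ Real.pi * ‖z‖ := by
      have hl : 0 ≤ r₁ * |φ| := mul_nonneg hr₁ (abs_nonneg φ)
      have hr : 0 ≤ Real.pi * ‖z‖ := mul_nonneg hπ.le hDnn
      nlinarith
    calc |r₂ - r₁| + r₁ * |φ| ≤ ‖z‖ + Real.pi * ‖z‖ := by linarith
      _ = (1 + Real.pi) * ‖z‖ := by ring
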